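/- Let A : (0,∞) × (0,∞) → ℝ be C² and let c₂, c₃ : (0,∞) → ℝ be differentiable. Suppose G(p,y,t) = A(p,t) + p·(−y²/(4t) + c₂(t)y + c₃(t)) satisfies the G-equation G_{yp}² − G_{yy} G_{pp} − G_{pt} = 0 for all p ∈ (0,∞), y ∈ ℝ, t ∈ (0,∞). Then there exists a constant c ∈ ℝ with c₂(t) = c/t for all t > 0, and the function Ã(p,t) = A(p,t) + p·c₃(t) satisfies t·p·Ã_{pp} − 2t²·Ã_{pt} + 2c² = 0 for all p, t > 0. -/

import Mathlib

/-- Partial derivative of `f : ℝ³ → ℝ` in direction `v`, as a function. -/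
noncomputable def pd (v : ℝ × ℝ × ℝ) (f : ℝ × ℝ × ℝ → ℝ) : ℝ × ℝ × ℝ → ℝ :=
  fun q => fderiv ℝ f q v

/-- ∂/∂p for functions `G(p,y,t)`. -/
noncomputable def px : (ℝ × ℝ × ℝ → ℝ) → ℝ × ℝ × ℝ → ℝ := pd (1, 0, 0)
/-- ∂/∂y. -/
noncomputable def py : (ℝ × ℝ × ℝ → ℝ) → ℝ × ℝ × ℝ → ℝ := pd (0, 1, 0)
/-- ∂/∂t. -/
noncomputable def pt : (ℝ × ℝ × ℝ → ℝ) → ℝ × ℝ × ℝ → ℝ := pd (0, 0, 1)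

/-- Partial derivative of `f : ℝ² → ℝ` in direction `v`, as a function. -/
noncomputable def pd2 (v : ℝ × ℝ) (f : ℝ × ℝ → ℝ) : ℝ × ℝ → ℝ :=
  fun z => fderiv ℝ f z v

/-- Derivative in the first coordinate (i.e. `p` for `A(p,t)`). -/
noncomputable def p1 : (ℝ × ℝ → ℝ) → ℝ × ℝ → ℝ := pd2 (1, 0)
/-- Derivative in the second coordinate (i.e. `t`). -/
noncomputable def p2 : (ℝ × ℝ → ℝ) → ℝ × ℝ → ℝ := pd2 (0, 1)

section Aux

open Set ContinuousLinearMap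

/-- projection `r ↦ (r.1, r.2.2)` as a CLM -/
noncomputable def phiL : (ℝ × ℝ × ℝ) →L[ℝ] ℝ × ℝ :=
  (ContinuousLinearMap.fst ℝ ℝ (ℝ × ℝ)).prod
    ((ContinuousLinearMap.snd ℝ ℝ ℝ).comp (ContinuousLinearMap.snd ℝ ℝ (ℝ × ℝ)))

variable {A : ℝ × ℝ → ℝ} {c₂ c₃ : ℝ → ℝ}

lemma aux_openU : IsOpen {r : ℝ × ℝ × ℝ | 0 < r.1 ∧ 0 < r.2.2} :=
  (isOpen_lt continuous_const continuous_fst).inter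
    (isOpen_lt continuous_const (continuous_snd.comp continuous_snd))

lemma aux1 (hA : ContDiffOn ℝ 2 A (Set.Ioi (0:ℝ) ×ˢ Set.Ioi (0:ℝ)))
    (hc₂ : DifferentiableOn ℝ c₂ (Set.Ioi (0:ℝ)))
    (hc₃ : DifferentiableOn ℝ c₃ (Set.Ioi (0:ℝ)))
    (r : ℝ × ℝ × ℝ) (hp : 0 < r.1) (ht : 0 < r.2.2) :
    fderiv ℝ (fun r : ℝ×ℝ×ℝ =>
      A (r.1, r.2.2) + r.1 * (-(r.2.1 ^ 2) / (4 * r.2.2) + c₂ r.2.2 * r.2.1 + c₃ r.2.2)) r (0,1,0)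
      = r.1 * (-r.2.1/(2*r.2.2) + c₂ r.2.2) ∧
    fderiv ℝ (fun r : ℝ×ℝ×ℝ =>
      A (r.1, r.2.2) + r.1 * (-(r.2.1 ^ 2) / (4 * r.2.2) + c₂ r.2.2 * r.2.1 + c₃ r.2.2)) r (1,0,0)
      = fderiv ℝ A (r.1, r.2.2) (1,0)
        + (-(r.2.1 ^ 2) / (4 * r.2.2) + c₂ r.2.2 * r.2.1 + c₃ r.2.2) := by
  have hs2 : IsOpen (Set.Ioi (0:ℝ) ×ˢ Set.Ioi (0:ℝ)) := isOpen_Ioi.prod isOpen_Ioi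
  have hmem : (r.1, r.2.2) ∈ Set.Ioi (0:ℝ) ×ˢ Set.Ioi (0:ℝ) := ⟨hp, ht⟩
  have hAd : DifferentiableAt ℝ A (r.1, r.2.2) :=
    (hA.differentiableOn (by norm_num) _ hmem).differentiableAt (hs2.mem_nhds hmem)
  have hyC : HasFDerivAt (fun r : ℝ×ℝ×ℝ => r.2.1)
      ((ContinuousLinearMap.fst ℝ ℝ ℝ).comp (ContinuousLinearMap.snd ℝ ℝ (ℝ×ℝ))) r :=
    ((ContinuousLinearMap.fst ℝ ℝ ℝ).comp (ContinuousLinearMap.snd ℝ ℝ (ℝ×ℝ))).hasFDerivAt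
  have htC : HasFDerivAt (fun r : ℝ×ℝ×ℝ => r.2.2)
      ((ContinuousLinearMap.snd ℝ ℝ ℝ).comp (ContinuousLinearMap.snd ℝ ℝ (ℝ×ℝ))) r :=
    ((ContinuousLinearMap.snd ℝ ℝ ℝ).comp (ContinuousLinearMap.snd ℝ ℝ (ℝ×ℝ))).hasFDerivAt
  have hpC : HasFDerivAt (fun r : ℝ×ℝ×ℝ => r.1) (ContinuousLinearMap.fst ℝ ℝ (ℝ×ℝ)) r :=
    (ContinuousLinearMap.fst ℝ ℝ (ℝ×ℝ)).hasFDerivAt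
  have hphi : HasFDerivAt (fun r : ℝ×ℝ×ℝ => ((r.1, r.2.2) : ℝ×ℝ)) phiL r := phiL.hasFDerivAt
  have hAc : HasFDerivAt (fun r : ℝ×ℝ×ℝ => A (r.1, r.2.2))
      ((fderiv ℝ A (r.1, r.2.2)).comp phiL) r := hAd.hasFDerivAt.comp r hphi
  have hc2 : HasDerivAt c₂ (deriv c₂ r.2.2) r.2.2 :=
    ((hc₂ _ ht).differentiableAt (isOpen_Ioi.mem_nhds ht)).hasDerivAt
  have hc3 : HasDerivAt c₃ (deriv c₃ r.2.2) r.2.2 :=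
    ((hc₃ _ ht).differentiableAt (isOpen_Ioi.mem_nhds ht)).hasDerivAt
  have hc2' := hc2.comp_hasFDerivAt r htC
  have hc3' := hc3.comp_hasFDerivAt r htC
  have h4t : (4:ℝ) * r.2.2 ≠ 0 := by positivity
  have hinv : HasDerivAt (fun s : ℝ => (4*s)⁻¹) (-(4*1) / (4*r.2.2)^2) r.2.2 :=
    (((hasDerivAt_id r.2.2).const_mul (4:ℝ))).inv h4t
  have hinvF := hinv.comp_hasFDerivAt r htC
  have hsq : (fun r : ℝ×ℝ×ℝ => -(r.2.1 ^ 2)) = fun r : ℝ×ℝ×ℝ => -(r.2.1 * r.2.1) := by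
    funext r; ring
  have hnum : HasFDerivAt (fun r : ℝ×ℝ×ℝ => -(r.2.1 * r.2.1)) _ r := (hyC.mul hyC).neg
  rw [← hsq] at hnum
  have hB := ((hnum.mul hinvF).add (hc2'.mul hyC)).add hc3'
  have hG' := hAc.add (hpC.mul hB)
  have hfun : (fun r : ℝ×ℝ×ℝ =>
      A (r.1, r.2.2) + r.1 * (-(r.2.1 ^ 2) / (4 * r.2.2) + c₂ r.2.2 * r.2.1 + c₃ r.2.2))
      = (fun r : ℝ×ℝ×ℝ =>
      A (r.1, r.2.2) + r.1 * (-(r.2.1 ^ 2) * ((fun s : ℝ => (4*s)⁻¹) ∘ (fun r : ℝ×ℝ×ℝ => r.2.2)) r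
        + (c₂ ∘ (fun r : ℝ×ℝ×ℝ => r.2.2)) r * r.2.1 + (c₃ ∘ (fun r : ℝ×ℝ×ℝ => r.2.2)) r)) := by
    funext r; rw [div_eq_mul_inv]; rfl
  constructor
  · rw [hfun]; erw [hG'.fderiv]
    have h0 : phiL ((0:ℝ),(1:ℝ),(0:ℝ)) = 0 := rfl
    simp only [ContinuousLinearMap.add_apply, ContinuousLinearMap.comp_apply,
      ContinuousLinearMap.coe_fst', ContinuousLinearMap.coe_snd',
      ContinuousLinearMap.smul_apply, smul_eq_mul, h0, map_zero,
      ContinuousLinearMap.neg_apply, ContinuousLinearMap.coe_smul', Pi.smul_apply, Pi.add_apply, Pi.mul_apply, Pi.neg_apply]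
    simp only [Function.comp_apply]
    field_simp
    ring
  · rw [hfun]; erw [hG'.fderiv]
    have h0 : phiL ((1:ℝ),(0:ℝ),(0:ℝ)) = ((1:ℝ),(0:ℝ)) := rfl
    simp only [ContinuousLinearMap.add_apply, ContinuousLinearMap.comp_apply,
      ContinuousLinearMap.coe_fst', ContinuousLinearMap.coe_snd',
      ContinuousLinearMap.smul_apply, smul_eq_mul, h0,
      ContinuousLinearMap.neg_apply, ContinuousLinearMap.coe_smul', Pi.smul_apply, Pi.add_apply, Pi.mul_apply, Pi.neg_apply]
    simp only [Function.comp_apply, div_eq_mul_inv]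
    ring

lemma aux2 (hc₂ : DifferentiableOn ℝ c₂ (Set.Ioi (0:ℝ)))
    (r : ℝ × ℝ × ℝ) (ht : 0 < r.2.2) :
    fderiv ℝ (fun r : ℝ×ℝ×ℝ => r.1 * (-r.2.1/(2*r.2.2) + c₂ r.2.2)) r (1,0,0)
      = -r.2.1/(2*r.2.2) + c₂ r.2.2 ∧
    fderiv ℝ (fun r : ℝ×ℝ×ℝ => r.1 * (-r.2.1/(2*r.2.2) + c₂ r.2.2)) r (0,1,0)
      = r.1 * (-1/(2*r.2.2)) := by
  have hyC : HasFDerivAt (fun r : ℝ×ℝ×ℝ => r.2.1)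
      ((ContinuousLinearMap.fst ℝ ℝ ℝ).comp (ContinuousLinearMap.snd ℝ ℝ (ℝ×ℝ))) r :=
    ((ContinuousLinearMap.fst ℝ ℝ ℝ).comp (ContinuousLinearMap.snd ℝ ℝ (ℝ×ℝ))).hasFDerivAt
  have htC : HasFDerivAt (fun r : ℝ×ℝ×ℝ => r.2.2)
      ((ContinuousLinearMap.snd ℝ ℝ ℝ).comp (ContinuousLinearMap.snd ℝ ℝ (ℝ×ℝ))) r :=
    ((ContinuousLinearMap.snd ℝ ℝ ℝ).comp (ContinuousLinearMap.snd ℝ ℝ (ℝ×ℝ))).hasFDerivAt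
  have hpC : HasFDerivAt (fun r : ℝ×ℝ×ℝ => r.1) (ContinuousLinearMap.fst ℝ ℝ (ℝ×ℝ)) r :=
    (ContinuousLinearMap.fst ℝ ℝ (ℝ×ℝ)).hasFDerivAt
  have hc2 : HasDerivAt c₂ (deriv c₂ r.2.2) r.2.2 :=
    ((hc₂ _ ht).differentiableAt (isOpen_Ioi.mem_nhds ht)).hasDerivAt
  have hc2' := hc2.comp_hasFDerivAt r htC
  have h2t : (2:ℝ) * r.2.2 ≠ 0 := by positivity
  have hinv : HasDerivAt (fun s : ℝ => (2*s)⁻¹) (-(2*1) / (2*r.2.2)^2) r.2.2 :=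
    (((hasDerivAt_id r.2.2).const_mul (2:ℝ))).inv h2t
  have hinvF := hinv.comp_hasFDerivAt r htC
  have hH := hpC.mul ((hyC.neg.mul hinvF).add hc2')
  have hfun : (fun r : ℝ×ℝ×ℝ => r.1 * (-r.2.1/(2*r.2.2) + c₂ r.2.2))
      = (fun r : ℝ×ℝ×ℝ => r.1 * (-r.2.1 * ((fun s : ℝ => (2*s)⁻¹) ∘ (fun r : ℝ×ℝ×ℝ => r.2.2)) r
          + (c₂ ∘ (fun r : ℝ×ℝ×ℝ => r.2.2)) r)) := by
    funext r; rw [div_eq_mul_inv]; rfl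
  constructor
  · rw [hfun]; erw [hH.fderiv]
    simp only [ContinuousLinearMap.add_apply, ContinuousLinearMap.comp_apply,
      ContinuousLinearMap.coe_fst', ContinuousLinearMap.coe_snd',
      ContinuousLinearMap.smul_apply, smul_eq_mul,
      ContinuousLinearMap.neg_apply, ContinuousLinearMap.coe_smul', Pi.smul_apply, Pi.add_apply, Pi.mul_apply, Pi.neg_apply]
    simp only [Function.comp_apply, div_eq_mul_inv]
    ring
  · rw [hfun]; erw [hH.fderiv]
    simp only [ContinuousLinearMap.add_apply, ContinuousLinearMap.comp_apply,
      ContinuousLinearMap.coe_fst', ContinuousLinearMap.coe_snd',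
      ContinuousLinearMap.smul_apply, smul_eq_mul,
      ContinuousLinearMap.neg_apply, ContinuousLinearMap.coe_smul', Pi.smul_apply, Pi.add_apply, Pi.mul_apply, Pi.neg_apply]
    simp only [Function.comp_apply, div_eq_mul_inv]
    ring

lemma aux3 (hA : ContDiffOn ℝ 2 A (Set.Ioi (0:ℝ) ×ˢ Set.Ioi (0:ℝ)))
    (hc₂ : DifferentiableOn ℝ c₂ (Set.Ioi (0:ℝ)))
    (hc₃ : DifferentiableOn ℝ c₃ (Set.Ioi (0:ℝ)))
    (r : ℝ × ℝ × ℝ) (hp : 0 < r.1) (ht : 0 < r.2.2) :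
    fderiv ℝ (fun r : ℝ×ℝ×ℝ => fderiv ℝ A (r.1, r.2.2) (1,0)
        + (-(r.2.1 ^ 2) / (4 * r.2.2) + c₂ r.2.2 * r.2.1 + c₃ r.2.2)) r (1,0,0)
      = fderiv ℝ (fderiv ℝ A) (r.1, r.2.2) (1,0) (1,0) ∧
    fderiv ℝ (fun r : ℝ×ℝ×ℝ => fderiv ℝ A (r.1, r.2.2) (1,0)
        + (-(r.2.1 ^ 2) / (4 * r.2.2) + c₂ r.2.2 * r.2.1 + c₃ r.2.2)) r (0,0,1)
      = fderiv ℝ (fderiv ℝ A) (r.1, r.2.2) (0,1) (1,0)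
        + (r.2.1 ^ 2 / (4 * r.2.2 ^ 2) + deriv c₂ r.2.2 * r.2.1 + deriv c₃ r.2.2) := by
  have hs2 : IsOpen (Set.Ioi (0:ℝ) ×ˢ Set.Ioi (0:ℝ)) := isOpen_Ioi.prod isOpen_Ioi
  have hmem : (r.1, r.2.2) ∈ Set.Ioi (0:ℝ) ×ˢ Set.Ioi (0:ℝ) := ⟨hp, ht⟩
  have hF : ContDiffOn ℝ 1 (fun z => fderiv ℝ A z) (Set.Ioi (0:ℝ) ×ˢ Set.Ioi (0:ℝ)) :=
    hA.fderiv_of_isOpen hs2 (by norm_num)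
  have hFd : DifferentiableAt ℝ (fun z => fderiv ℝ A z) (r.1, r.2.2) :=
    (hF.differentiableOn one_ne_zero _ hmem).differentiableAt (hs2.mem_nhds hmem)
  have hyC : HasFDerivAt (fun r : ℝ×ℝ×ℝ => r.2.1)
      ((ContinuousLinearMap.fst ℝ ℝ ℝ).comp (ContinuousLinearMap.snd ℝ ℝ (ℝ×ℝ))) r :=
    ((ContinuousLinearMap.fst ℝ ℝ ℝ).comp (ContinuousLinearMap.snd ℝ ℝ (ℝ×ℝ))).hasFDerivAt
  have htC : HasFDerivAt (fun r : ℝ×ℝ×ℝ => r.2.2)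
      ((ContinuousLinearMap.snd ℝ ℝ ℝ).comp (ContinuousLinearMap.snd ℝ ℝ (ℝ×ℝ))) r :=
    ((ContinuousLinearMap.snd ℝ ℝ ℝ).comp (ContinuousLinearMap.snd ℝ ℝ (ℝ×ℝ))).hasFDerivAt
  have hphi : HasFDerivAt (fun r : ℝ×ℝ×ℝ => ((r.1, r.2.2) : ℝ×ℝ)) phiL r := phiL.hasFDerivAt
  have happ : HasFDerivAt (fun z : ℝ×ℝ => fderiv ℝ A z ((1:ℝ),(0:ℝ)))
      ((ContinuousLinearMap.apply ℝ ℝ ((1:ℝ),(0:ℝ))).comp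
        (fderiv ℝ (fun z => fderiv ℝ A z) (r.1, r.2.2))) (r.1, r.2.2) :=
    (ContinuousLinearMap.apply ℝ ℝ ((1:ℝ),(0:ℝ))).hasFDerivAt.comp _ hFd.hasFDerivAt
  have hP : HasFDerivAt (fun r : ℝ×ℝ×ℝ => fderiv ℝ A (r.1, r.2.2) ((1:ℝ),(0:ℝ)))
      (((ContinuousLinearMap.apply ℝ ℝ ((1:ℝ),(0:ℝ))).comp
        (fderiv ℝ (fun z => fderiv ℝ A z) (r.1, r.2.2))).comp phiL) r :=
    by have := happ.comp r hphi; exact this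
  have hc2 : HasDerivAt c₂ (deriv c₂ r.2.2) r.2.2 :=
    ((hc₂ _ ht).differentiableAt (isOpen_Ioi.mem_nhds ht)).hasDerivAt
  have hc3 : HasDerivAt c₃ (deriv c₃ r.2.2) r.2.2 :=
    ((hc₃ _ ht).differentiableAt (isOpen_Ioi.mem_nhds ht)).hasDerivAt
  have hc2' := hc2.comp_hasFDerivAt r htC
  have hc3' := hc3.comp_hasFDerivAt r htC
  have h4t : (4:ℝ) * r.2.2 ≠ 0 := by positivity
  have hinv : HasDerivAt (fun s : ℝ => (4*s)⁻¹) (-(4*1) / (4*r.2.2)^2) r.2.2 :=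
    (((hasDerivAt_id r.2.2).const_mul (4:ℝ))).inv h4t
  have hinvF := hinv.comp_hasFDerivAt r htC
  have hsq : (fun r : ℝ×ℝ×ℝ => -(r.2.1 ^ 2)) = fun r : ℝ×ℝ×ℝ => -(r.2.1 * r.2.1) := by
    funext r; ring
  have hnum : HasFDerivAt (fun r : ℝ×ℝ×ℝ => -(r.2.1 * r.2.1)) _ r := (hyC.mul hyC).neg
  rw [← hsq] at hnum
  have hB := ((hnum.mul hinvF).add (hc2'.mul hyC)).add hc3'
  have hH := hP.add hB
  have hfun : (fun r : ℝ×ℝ×ℝ => fderiv ℝ A (r.1, r.2.2) (1,0)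
        + (-(r.2.1 ^ 2) / (4 * r.2.2) + c₂ r.2.2 * r.2.1 + c₃ r.2.2))
      = (fun r : ℝ×ℝ×ℝ => fderiv ℝ A (r.1, r.2.2) ((1:ℝ),(0:ℝ))
        + (-(r.2.1 ^ 2) * ((fun s : ℝ => (4*s)⁻¹) ∘ (fun r : ℝ×ℝ×ℝ => r.2.2)) r
          + (c₂ ∘ (fun r : ℝ×ℝ×ℝ => r.2.2)) r * r.2.1 + (c₃ ∘ (fun r : ℝ×ℝ×ℝ => r.2.2)) r)) := by
    funext r; rw [div_eq_mul_inv]; rfl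
  have ht' : r.2.2 ≠ 0 := ne_of_gt ht
  constructor
  · rw [hfun]; erw [hH.fderiv]
    have h0 : phiL ((1:ℝ),(0:ℝ),(0:ℝ)) = ((1:ℝ),(0:ℝ)) := rfl
    simp only [ContinuousLinearMap.add_apply, ContinuousLinearMap.comp_apply,
      ContinuousLinearMap.coe_fst', ContinuousLinearMap.coe_snd',
      ContinuousLinearMap.smul_apply, smul_eq_mul, h0,
      ContinuousLinearMap.neg_apply, ContinuousLinearMap.coe_smul', Pi.smul_apply, Pi.add_apply, Pi.mul_apply, Pi.neg_apply,
      ContinuousLinearMap.apply_apply]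
    ring
  · rw [hfun]; erw [hH.fderiv]
    have h0 : phiL ((0:ℝ),(0:ℝ),(1:ℝ)) = ((0:ℝ),(1:ℝ)) := rfl
    simp only [ContinuousLinearMap.add_apply, ContinuousLinearMap.comp_apply,
      ContinuousLinearMap.coe_fst', ContinuousLinearMap.coe_snd',
      ContinuousLinearMap.smul_apply, smul_eq_mul, h0,
      ContinuousLinearMap.neg_apply, ContinuousLinearMap.coe_smul', Pi.smul_apply, Pi.add_apply, Pi.mul_apply, Pi.neg_apply,
      ContinuousLinearMap.apply_apply]
    field_simp
    ring

lemma aux4 (hA : ContDiffOn ℝ 2 A (Set.Ioi (0:ℝ) ×ˢ Set.Ioi (0:ℝ)))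
    (hc₃ : DifferentiableOn ℝ c₃ (Set.Ioi (0:ℝ)))
    (z : ℝ × ℝ) (hz : z ∈ Set.Ioi (0:ℝ) ×ˢ Set.Ioi (0:ℝ)) :
    fderiv ℝ (fun z : ℝ×ℝ => A z + z.1 * c₃ z.2) z (1,0)
      = fderiv ℝ A z (1,0) + c₃ z.2 := by
  have hs2 : IsOpen (Set.Ioi (0:ℝ) ×ˢ Set.Ioi (0:ℝ)) := isOpen_Ioi.prod isOpen_Ioi
  have hAd : DifferentiableAt ℝ A z :=
    (hA.differentiableOn (by norm_num) _ hz).differentiableAt (hs2.mem_nhds hz)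
  have hpC : HasFDerivAt (fun z : ℝ×ℝ => z.1) (ContinuousLinearMap.fst ℝ ℝ ℝ) z :=
    (ContinuousLinearMap.fst ℝ ℝ ℝ).hasFDerivAt
  have htC : HasFDerivAt (fun z : ℝ×ℝ => z.2) (ContinuousLinearMap.snd ℝ ℝ ℝ) z :=
    (ContinuousLinearMap.snd ℝ ℝ ℝ).hasFDerivAt
  have hc3 : HasDerivAt c₃ (deriv c₃ z.2) z.2 :=
    ((hc₃ _ hz.2).differentiableAt (isOpen_Ioi.mem_nhds hz.2)).hasDerivAt
  have hc3' := hc3.comp_hasFDerivAt z htC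
  have hH := hAd.hasFDerivAt.add (hpC.mul hc3')
  have hfun : (fun z : ℝ×ℝ => A z + z.1 * c₃ z.2)
      = (fun z : ℝ×ℝ => A z + z.1 * (c₃ ∘ (fun z : ℝ×ℝ => z.2)) z) := rfl
  rw [hfun]; erw [hH.fderiv]
  simp only [ContinuousLinearMap.add_apply, ContinuousLinearMap.comp_apply,
    ContinuousLinearMap.coe_fst', ContinuousLinearMap.coe_snd',
    ContinuousLinearMap.smul_apply, smul_eq_mul,
    ContinuousLinearMap.coe_smul', Pi.smul_apply, Pi.add_apply, Pi.mul_apply, Pi.neg_apply, Function.comp_apply]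
  ring

lemma aux5 (hA : ContDiffOn ℝ 2 A (Set.Ioi (0:ℝ) ×ˢ Set.Ioi (0:ℝ)))
    (hc₃ : DifferentiableOn ℝ c₃ (Set.Ioi (0:ℝ)))
    (z : ℝ × ℝ) (hz : z ∈ Set.Ioi (0:ℝ) ×ˢ Set.Ioi (0:ℝ)) :
    fderiv ℝ (fun z : ℝ×ℝ => fderiv ℝ A z (1,0) + c₃ z.2) z (1,0)
      = fderiv ℝ (fderiv ℝ A) z (1,0) (1,0) ∧
    fderiv ℝ (fun z : ℝ×ℝ => fderiv ℝ A z (1,0) + c₃ z.2) z (0,1)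
      = fderiv ℝ (fderiv ℝ A) z (0,1) (1,0) + deriv c₃ z.2 := by
  have hs2 : IsOpen (Set.Ioi (0:ℝ) ×ˢ Set.Ioi (0:ℝ)) := isOpen_Ioi.prod isOpen_Ioi
  have hF : ContDiffOn ℝ 1 (fun z => fderiv ℝ A z) (Set.Ioi (0:ℝ) ×ˢ Set.Ioi (0:ℝ)) :=
    hA.fderiv_of_isOpen hs2 (by norm_num)
  have hFd : DifferentiableAt ℝ (fun z => fderiv ℝ A z) z :=
    (hF.differentiableOn one_ne_zero _ hz).differentiableAt (hs2.mem_nhds hz)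
  have happ : HasFDerivAt (fun z : ℝ×ℝ => fderiv ℝ A z ((1:ℝ),(0:ℝ)))
      ((ContinuousLinearMap.apply ℝ ℝ ((1:ℝ),(0:ℝ))).comp
        (fderiv ℝ (fun z => fderiv ℝ A z) z)) z :=
    (ContinuousLinearMap.apply ℝ ℝ ((1:ℝ),(0:ℝ))).hasFDerivAt.comp _ hFd.hasFDerivAt
  have htC : HasFDerivAt (fun z : ℝ×ℝ => z.2) (ContinuousLinearMap.snd ℝ ℝ ℝ) z :=
    (ContinuousLinearMap.snd ℝ ℝ ℝ).hasFDerivAt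
  have hc3 : HasDerivAt c₃ (deriv c₃ z.2) z.2 :=
    ((hc₃ _ hz.2).differentiableAt (isOpen_Ioi.mem_nhds hz.2)).hasDerivAt
  have hc3' := hc3.comp_hasFDerivAt z htC
  have hH := happ.add hc3'
  have hfun : (fun z : ℝ×ℝ => fderiv ℝ A z (1,0) + c₃ z.2)
      = (fun z : ℝ×ℝ => fderiv ℝ A z ((1:ℝ),(0:ℝ)) + (c₃ ∘ (fun z : ℝ×ℝ => z.2)) z) := rfl
  constructor
  · rw [hfun]; erw [hH.fderiv]
    simp [ContinuousLinearMap.apply_apply]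
  · rw [hfun]; erw [hH.fderiv]
    simp [ContinuousLinearMap.apply_apply]

end Aux

/-- Class C branch: if `A(p,t)` is C² on `(0,∞) × (0,∞)`, `c₂, c₃` are differentiable
on `(0,∞)`, and `G(p,y,t) = A(p,t) + p(-y²/(4t) + c₂(t)y + c₃(t))` satisfies the
G-equation `G_{yp}² - G_{yy} G_{pp} - G_{pt} = 0` for all `p > 0`, `y ∈ ℝ`, `t > 0`,
then `c₂(t) = c/t` for a constant `c`, and `Ã(p,t) = A(p,t) + p c₃(t)` satisfies
`t p Ã_{pp} - 2t² Ã_{pt} + 2c² = 0` for all `p, t > 0`. -/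
theorem stmt15 (A : ℝ × ℝ → ℝ)
    (hA : ContDiffOn ℝ 2 A (Set.Ioi (0 : ℝ) ×ˢ Set.Ioi (0 : ℝ)))
    (c₂ c₃ : ℝ → ℝ)
    (hc₂ : DifferentiableOn ℝ c₂ (Set.Ioi (0 : ℝ)))
    (hc₃ : DifferentiableOn ℝ c₃ (Set.Ioi (0 : ℝ)))
    (hG : ∀ p > (0 : ℝ), ∀ y : ℝ, ∀ t > (0 : ℝ),
      let G : ℝ × ℝ × ℝ → ℝ := fun r =>
        A (r.1, r.2.2) + r.1 * (-(r.2.1 ^ 2) / (4 * r.2.2) + c₂ r.2.2 * r.2.1 + c₃ r.2.2)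
      (px (py G) (p, y, t)) ^ 2 - py (py G) (p, y, t) * px (px G) (p, y, t)
        - pt (px G) (p, y, t) = 0) :
    ∃ c : ℝ, (∀ t > (0 : ℝ), c₂ t = c / t) ∧
      ∀ p > (0 : ℝ), ∀ t > (0 : ℝ),
        let Atil : ℝ × ℝ → ℝ := fun z => A z + z.1 * c₃ z.2
        t * p * p1 (p1 Atil) (p, t) - 2 * t ^ 2 * p2 (p1 Atil) (p, t) + 2 * c ^ 2 = 0 := by
  have hs2 : IsOpen (Set.Ioi (0:ℝ) ×ˢ Set.Ioi (0:ℝ)) := isOpen_Ioi.prod isOpen_Ioi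
  -- the main pointwise equation
  have key : ∀ p > (0:ℝ), ∀ y : ℝ, ∀ t > (0:ℝ),
      (-y/(2*t) + c₂ t)^2 - (p * (-1/(2*t))) * (fderiv ℝ (fderiv ℝ A) (p,t) (1,0) (1,0))
        - (fderiv ℝ (fderiv ℝ A) (p,t) (0,1) (1,0)
          + (y^2/(4*t^2) + deriv c₂ t * y + deriv c₃ t)) = 0 := by
    intro p hp y t ht
    have h := hG p hp y t ht
    simp only [px, py, pt, pd] at h
    set G : ℝ × ℝ × ℝ → ℝ := fun r =>
        A (r.1, r.2.2) + r.1 * (-(r.2.1 ^ 2) / (4 * r.2.2) + c₂ r.2.2 * r.2.1 + c₃ r.2.2) with hGdef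
    have hU : {r : ℝ × ℝ × ℝ | 0 < r.1 ∧ 0 < r.2.2} ∈ nhds ((p,y,t) : ℝ×ℝ×ℝ) :=
      aux_openU.mem_nhds ⟨hp, ht⟩
    -- py G agrees with Hy near (p,y,t)
    have e1 : (pd (0,1,0) G)
        =ᶠ[nhds ((p,y,t) : ℝ×ℝ×ℝ)] (fun r : ℝ×ℝ×ℝ => r.1 * (-r.2.1/(2*r.2.2) + c₂ r.2.2)) := by
      filter_upwards [hU] with r hr
      exact (aux1 hA hc₂ hc₃ r hr.1 hr.2).1
    have e2 : (pd (1,0,0) G)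
        =ᶠ[nhds ((p,y,t) : ℝ×ℝ×ℝ)] (fun r : ℝ×ℝ×ℝ => fderiv ℝ A (r.1, r.2.2) (1,0)
          + (-(r.2.1 ^ 2) / (4 * r.2.2) + c₂ r.2.2 * r.2.1 + c₃ r.2.2)) := by
      filter_upwards [hU] with r hr
      exact (aux1 hA hc₂ hc₃ r hr.1 hr.2).2
    rw [e1.fderiv_eq, e2.fderiv_eq] at h
    have a2 := aux2 hc₂ (p,y,t) ht
    have a3 := aux3 hA hc₂ hc₃ (p,y,t) hp ht
    rw [a2.1, a2.2, a3.1, a3.2] at h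
    convert h using 2 <;> norm_num
  -- derivative of c₂
  have hc2' : ∀ t > (0:ℝ), deriv c₂ t = -c₂ t / t := by
    intro t ht
    have h1 := key 1 one_pos 1 t ht
    have hm := key 1 one_pos (-1) t ht
    have htne : t ≠ 0 := ne_of_gt ht
    have hsub : 2 * deriv c₂ t = (-1/(2*t) + c₂ t)^2 - (-(-1)/(2*t) + c₂ t)^2 := by
      linear_combination hm - h1
    have hr : (-1/(2*t) + c₂ t)^2 - (-(-1)/(2*t) + c₂ t)^2 = -2*(c₂ t)/t := by
      field_simp
      ring
    rw [hr] at hsub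
    rw [eq_div_iff htne]
    have h2 : (2:ℝ) ≠ 0 := two_ne_zero
    field_simp at hsub ⊢
    linarith [hsub]
  -- t * c₂ t is constant
  have hconst : ∀ t > (0:ℝ), t * c₂ t = 1 * c₂ 1 := by
    intro t ht
    have hg : ∀ x ∈ Set.Ioi (0:ℝ), HasDerivAt (fun s => s * c₂ s) 0 x := by
      intro x hx
      have hc2 : HasDerivAt c₂ (deriv c₂ x) x :=
        ((hc₂ _ hx).differentiableAt (isOpen_Ioi.mem_nhds hx)).hasDerivAt
      have hxne : x ≠ 0 := ne_of_gt (Set.mem_Ioi.mp hx)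
      have hd := (hasDerivAt_id x).mul hc2
      have hval : 1 * c₂ x + id x * deriv c₂ x = 0 := by
        rw [hc2' x (Set.mem_Ioi.mp hx)]
        simp only [id]
        field_simp
        ring
      rwa [hval] at hd
    have hdiff : DifferentiableOn ℝ (fun s => s * c₂ s) (Set.Ioi (0:ℝ)) :=
      fun x hx => ((hg x hx).differentiableAt).differentiableWithinAt
    have hzero : ∀ x ∈ Set.Ioi (0:ℝ), fderivWithin ℝ (fun s => s * c₂ s) (Set.Ioi (0:ℝ)) x = 0 := by
      intro x hx
      have : fderivWithin ℝ (fun s => s * c₂ s) (Set.Ioi (0:ℝ)) x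
          = fderiv ℝ (fun s => s * c₂ s) x :=
        fderivWithin_of_isOpen isOpen_Ioi hx
      rw [this, (hg x hx).hasFDerivAt.fderiv]
      ext
      simp
    exact (convex_Ioi (0:ℝ)).is_const_of_fderivWithin_eq_zero hdiff hzero ht (Set.mem_Ioi.mpr one_pos)
  refine ⟨c₂ 1, ?_, ?_⟩
  · intro t ht
    have h := hconst t ht
    have htne : t ≠ 0 := ne_of_gt ht
    rw [eq_div_iff htne]
    linarith [h]
  · intro p hp t ht
    intro Atil
    have hzmem : ((p,t) : ℝ×ℝ) ∈ Set.Ioi (0:ℝ) ×ˢ Set.Ioi (0:ℝ) := ⟨hp, ht⟩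
    have hU : (Set.Ioi (0:ℝ) ×ˢ Set.Ioi (0:ℝ)) ∈ nhds ((p,t) : ℝ×ℝ) := hs2.mem_nhds hzmem
    have e1 : (pd2 (1,0) Atil)
        =ᶠ[nhds ((p,t) : ℝ×ℝ)] (fun z : ℝ×ℝ => fderiv ℝ A z (1,0) + c₃ z.2) := by
      filter_upwards [hU] with z hz
      exact aux4 hA hc₃ z hz
    have a5 := aux5 hA hc₃ (p,t) hzmem
    have hp1 : p1 (p1 Atil) (p,t) = fderiv ℝ (fderiv ℝ A) (p,t) (1,0) (1,0) := by
      simp only [p1, pd2]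
      rw [e1.fderiv_eq, a5.1]
    have hp2 : p2 (p1 Atil) (p,t) = fderiv ℝ (fderiv ℝ A) (p,t) (0,1) (1,0) + deriv c₃ t := by
      simp only [p1, p2, pd2]
      rw [e1.fderiv_eq, a5.2]
    rw [hp1, hp2]
    have h0 := key p hp 0 t ht
    have hc2t : c₂ t = c₂ 1 / t := by
      have h := hconst t ht
      have htne : t ≠ 0 := ne_of_gt ht
      rw [eq_div_iff htne]
      linarith [h]
    rw [hc2t] at h0
    have htne : t ≠ 0 := ne_of_gt ht
    field_simp at h0
    apply mul_left_cancel₀ htne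
    linear_combination (t/8) * h0
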